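/- Let $R$ be a Noetherian ring of characteristic $p$, $\sqrt{(0)}$ its nilradical, $R_{\mathrm{red}}=R/\sqrt{(0)}$, and $\mathfrak a, J$ ideals with $\mathfrak a\subseteq\sqrt J$, with images $\bar{\mathfrak a},\bar J$ in $R_{\mathrm{red}}$. Let $\mu$ be the least number of generators of $\mathfrak a$ and $q'=p^{e'}$ a power with $\sqrt{(0)}^{[q']}=0$. Then for all $q=p^e$: $\nu_{\bar{\mathfrak a}}^{\bar J}(qq')/(qq') \le \nu_{\mathfrak a}^J(qq')/(qq') \le \nu_{\bar{\mathfrak a}}^{\bar J}(q)/q + \mu/q$. In particular, if the limit of $\nu_{\bar{\mathfrak a}}^{\bar J}(q)/q$ exists, so does that of $\nu_{\mathfrak a}^J(q)/q$, and they are equal. -/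

import Mathlib

open Filter

noncomputable section

/-- The `q`-th Frobenius power `J^{[q]}` of an ideal: the ideal generated by
`q`-th powers of elements of `J`. -/
def Ideal.frobPow {R : Type*} [CommSemiring R] (J : Ideal R) (q : ℕ) : Ideal R :=
  Ideal.span ((fun x => x ^ q) '' (J : Set R))

/-- `ν_𝔞^J(q) = max {r | 𝔞^r ⊄ J^{[q]}}` (with value `0` if `𝔞 ⊆ J^{[q]}`). -/
def Ideal.fnu {R : Type*} [CommSemiring R] (𝔞 J : Ideal R) (q : ℕ) : ℕ :=
  sSup {r : ℕ | ¬ 𝔞 ^ r ≤ J.frobPow q}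

/-- `c₊^J(𝔞) = limsup_{q = pᵉ → ∞} ν_𝔞^J(q)/q`. -/
def Ideal.cplus {R : Type*} [CommSemiring R] (𝔞 J : Ideal R) (p : ℕ) : ℝ :=
  Filter.limsup (fun e : ℕ => (𝔞.fnu J (p ^ e) : ℝ) / (p ^ e : ℕ)) Filter.atTop

/-- `c₋^J(𝔞) = liminf_{q = pᵉ → ∞} ν_𝔞^J(q)/q`. -/
def Ideal.cminus {R : Type*} [CommSemiring R] (𝔞 J : Ideal R) (p : ℕ) : ℝ :=
  Filter.liminf (fun e : ℕ => (𝔞.fnu J (p ^ e) : ℝ) / (p ^ e : ℕ)) Filter.atTop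

/-- `x ∈ R°`, i.e. `x` lies outside every minimal prime of `R`. -/
def Ideal.memRcirc {R : Type*} [CommSemiring R] (x : R) : Prop :=
  ∀ P ∈ minimalPrimes R, x ∉ P

/-- The length of an `R`-module `M`, computed as the Krull dimension of its
lattice of submodules (converted to a natural number; `0` by convention in the
degenerate infinite cases). -/
def moduleLength (R M : Type*) [Ring R] [AddCommGroup M] [Module R M] : ℕ :=
  ((Order.krullDim (Submodule R M)).unbotD 0).toNat

/-- The Hilbert–Samuel multiplicity of an ideal `I` in a `d`-dimensional ring:
`e(I) = lim_n d! · ℓ(R/Iⁿ)/n^d` (expressed as a `limsup` so as to be total). -/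
def Ideal.eMult {R : Type*} [CommRing R] (d : ℕ) (I : Ideal R) : ℝ :=
  Filter.limsup
    (fun n : ℕ => (d.factorial : ℝ) * (moduleLength R (R ⧸ I ^ n) : ℝ) / (n : ℝ) ^ d)
    Filter.atTop

end

section FrobLemmas

namespace Ideal

variable {R : Type*} [CommSemiring R]

theorem frobPow_def (I : Ideal R) (q : ℕ) :
    I.frobPow q = Ideal.span ((fun x => x ^ q) '' (I : Set R)) := rfl

theorem frobPow_mono {I J : Ideal R} (h : I ≤ J) (q : ℕ) : I.frobPow q ≤ J.frobPow q :=
  Ideal.span_mono (Set.image_mono h)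

theorem pow_mem_frobPow {I : Ideal R} {x : R} (hx : x ∈ I) (q : ℕ) : x ^ q ∈ I.frobPow q :=
  Ideal.subset_span ⟨x, hx, rfl⟩

theorem frobPow_span (p : ℕ) [Fact p.Prime] [CharP R p] (T : Set R) (n : ℕ) :
    (Ideal.span T).frobPow (p ^ n) = Ideal.span ((fun x => x ^ p ^ n) '' T) := by
  refine le_antisymm ?_ (Ideal.span_mono (Set.image_mono Ideal.subset_span))
  rw [frobPow_def]
  refine Ideal.span_le.mpr ?_
  rintro y ⟨x, hx, rfl⟩
  induction hx using Submodule.span_induction with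
  | mem z hz => exact Ideal.subset_span ⟨z, hz, rfl⟩
  | zero =>
      show (0:R) ^ p ^ n ∈ _
      rw [zero_pow (pow_ne_zero n (Fact.out : p.Prime).ne_zero)]
      exact zero_mem _
  | add a b _ _ ha hb =>
      show (a + b) ^ p ^ n ∈ _
      rw [add_pow_char_pow]
      exact add_mem ha hb
  | smul r a _ ha =>
      show (r • a) ^ p ^ n ∈ _
      rw [smul_eq_mul, mul_pow]
      exact Ideal.mul_mem_left _ _ ha

end Ideal

end FrobLemmas

namespace Ideal

variable {R : Type*} [CommSemiring R]

theorem map_eq_span_image {S : Type*} [CommSemiring S] (f : R →+* S) (I : Ideal R) :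
    I.map f = Ideal.span (f '' (I : Set R)) := by
  conv_lhs => rw [← Ideal.span_eq I]
  rw [Ideal.map_span]

theorem frobPow_map_eq {S : Type*} [CommSemiring S] (f : R →+* S) (I : Ideal R) (q : ℕ) :
    (I.frobPow q).map f = Ideal.span ((fun x => x ^ q) '' (f '' (I : Set R))) := by
  rw [frobPow_def, Ideal.map_span, Set.image_image, Set.image_image]
  simp only [map_pow]

theorem map_frobPow_le {S : Type*} [CommSemiring S] (f : R →+* S) (I : Ideal R) (q : ℕ) :
    (I.frobPow q).map f ≤ (I.map f).frobPow q := by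
  rw [frobPow_map_eq]
  refine Ideal.span_mono (Set.image_mono ?_)
  rintro y ⟨x, hx, rfl⟩
  exact Ideal.mem_map_of_mem f hx

theorem map_frobPow (p : ℕ) [Fact p.Prime] {S : Type*} [CommSemiring S] [CharP S p]
    (f : R →+* S) (I : Ideal R) (n : ℕ) :
    (I.frobPow (p ^ n)).map f = (I.map f).frobPow (p ^ n) := by
  rw [frobPow_map_eq, map_eq_span_image, frobPow_span]

theorem frobPow_sup_le (p : ℕ) [Fact p.Prime] [CharP R p] (I K : Ideal R) (n : ℕ) :
    (I ⊔ K).frobPow (p ^ n) ≤ I.frobPow (p ^ n) ⊔ K.frobPow (p ^ n) := by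
  have h : (I ⊔ K : Ideal R) = Ideal.span ((I : Set R) ∪ (K : Set R)) := by
    rw [Ideal.span_union, Ideal.span_eq, Ideal.span_eq]
  rw [h, frobPow_span, Set.image_union]
  refine Ideal.span_le.mpr ?_
  rintro y (hy | hy)
  · exact Ideal.mem_sup_left (Ideal.subset_span hy)
  · exact Ideal.mem_sup_right (Ideal.subset_span hy)

theorem frobPow_frobPow (p : ℕ) [Fact p.Prime] [CharP R p] (I : Ideal R) (q n : ℕ) :
    (I.frobPow q).frobPow (p ^ n) = I.frobPow (q * p ^ n) := by
  rw [frobPow_def I q, frobPow_span, Set.image_image, frobPow_def]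
  simp only [← pow_mul]

theorem prod_pow_mem_pow (I : Ideal R) (s : Finset R) (hs : ∀ a ∈ s, a ∈ I) (b : R → ℕ) :
    (∏ a ∈ s, a ^ b a) ∈ I ^ (∑ a ∈ s, b a) := by
  rw [← Finset.prod_pow_eq_pow_sum]
  exact Ideal.prod_mem_prod fun a ha => Ideal.pow_mem_pow (hs a ha) _

theorem monomial_mem (s : Finset R) (c : R → ℕ) (m q : ℕ) (hq : 0 < q)
    (hsum : q * (m + s.card) + 1 ≤ ∑ a ∈ s, c a) :
    (∏ a ∈ s, a ^ c a) ∈ ((Ideal.span (s : Set R)) ^ (m + 1)).frobPow q := by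
  have hdecomp : ∀ a : R, a ^ c a = (a ^ (c a / q)) ^ q * a ^ (c a % q) := by
    intro a
    conv_lhs => rw [← Nat.div_add_mod (c a) q]
    rw [pow_add, mul_comm q (c a / q), pow_mul]
  have hsplit : (∏ a ∈ s, a ^ c a) =
      (∏ a ∈ s, a ^ (c a / q)) ^ q * ∏ a ∈ s, a ^ (c a % q) := by
    rw [← Finset.prod_pow, ← Finset.prod_mul_distrib]
    exact Finset.prod_congr rfl fun a _ => hdecomp a
  -- arithmetic: ∑ (c a / q) ≥ m + 1
  have hsum2 : (∑ a ∈ s, c a) = q * (∑ a ∈ s, c a / q) + ∑ a ∈ s, c a % q := by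
    rw [Finset.mul_sum, ← Finset.sum_add_distrib]
    exact Finset.sum_congr rfl fun a _ => (Nat.div_add_mod (c a) q).symm
  have hmod : (∑ a ∈ s, c a % q) + s.card ≤ s.card * q := by
    calc (∑ a ∈ s, c a % q) + s.card = ∑ a ∈ s, (c a % q + 1) := by
          rw [Finset.sum_add_distrib, Finset.sum_const, smul_eq_mul, mul_one]
      _ ≤ ∑ _a ∈ s, q := Finset.sum_le_sum fun a _ => Nat.mod_lt _ hq
      _ = s.card * q := by rw [Finset.sum_const, smul_eq_mul]
  have hX : m + 1 ≤ ∑ a ∈ s, c a / q := by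
    have hlt : q * m < q * (∑ a ∈ s, c a / q) := by
      have h1 : q * (m + s.card) + 1 ≤ q * (∑ a ∈ s, c a / q) + ∑ a ∈ s, c a % q := by
        rw [← hsum2]; exact hsum
      have h2 : q * (m + s.card) = q * m + s.card * q := by ring
      omega
    exact Nat.lt_of_mul_lt_mul_left hlt
  rw [hsplit]
  refine Ideal.mul_mem_right _ _ ?_
  refine pow_mem_frobPow ?_ q
  refine (Ideal.pow_le_pow_right hX) ?_
  exact prod_pow_mem_pow _ s (fun a ha => Ideal.subset_span ha) _

end Ideal

namespace Ideal

variable {R : Type*} [CommSemiring R]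

theorem span_pow_le_frobPow (s : Finset R) (m q : ℕ) (hq : 0 < q) :
    Ideal.span (s : Set R) ^ (q * (m + s.card) + 1) ≤
      (Ideal.span (s : Set R) ^ (m + 1)).frobPow q := by
  classical
  rw [← Ideal.submodule_span_eq, Submodule.span_pow]
  refine Submodule.span_le.mpr ?_
  intro x hx
  rw [Set.mem_pow] at hx
  obtain ⟨f, rfl⟩ := hx
  rw [List.prod_ofFn]
  have hmaps : ∀ i ∈ (Finset.univ : Finset (Fin (q * (m + s.card) + 1))),
      ((f i : R)) ∈ s := fun i _ => (f i).2
  rw [← Finset.prod_fiberwise_of_maps_to hmaps (fun i => ((f i : R)))]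
  have hinner : ∀ a ∈ s,
      (∏ i ∈ Finset.univ.filter (fun i => ((f i : R)) = a), ((f i : R))) =
        a ^ (Finset.univ.filter (fun i => ((f i : R)) = a)).card := by
    intro a _
    rw [Finset.prod_congr rfl (fun i hi => (Finset.mem_filter.mp hi).2),
      Finset.prod_const]
  rw [Finset.prod_congr rfl hinner]
  refine Ideal.monomial_mem s _ m q hq ?_
  rw [← Finset.card_eq_sum_card_fiberwise hmaps, Finset.card_univ, Fintype.card_fin]

theorem fnu_le_of {𝔞 J : Ideal R} {q B : ℕ} (h : 𝔞 ^ (B + 1) ≤ J.frobPow q) :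
    𝔞.fnu J q ≤ B := by
  have hub : ∀ r ∈ {r : ℕ | ¬ 𝔞 ^ r ≤ J.frobPow q}, r ≤ B := by
    intro r hr
    by_contra hc
    exact hr ((Ideal.pow_le_pow_right (by omega)).trans h)
  rcases Set.eq_empty_or_nonempty {r : ℕ | ¬ 𝔞 ^ r ≤ J.frobPow q} with he | hne
  · rw [Ideal.fnu, he, csSup_empty]
    exact bot_le
  · exact csSup_le hne hub

theorem bddAbove_of {𝔞 J : Ideal R} {q B : ℕ} (h : 𝔞 ^ (B + 1) ≤ J.frobPow q) :
    BddAbove {r : ℕ | ¬ 𝔞 ^ r ≤ J.frobPow q} := by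
  refine ⟨B, fun r hr => ?_⟩
  by_contra hc
  exact hr ((Ideal.pow_le_pow_right (by omega)).trans h)

theorem pow_fnu_succ {𝔞 J : Ideal R} {q B : ℕ} (h : 𝔞 ^ (B + 1) ≤ J.frobPow q) :
    𝔞 ^ (𝔞.fnu J q + 1) ≤ J.frobPow q := by
  by_contra hc
  have h1 : 𝔞.fnu J q + 1 ∈ {r : ℕ | ¬ 𝔞 ^ r ≤ J.frobPow q} := hc
  have h2 := le_csSup (bddAbove_of h) h1
  rw [Ideal.fnu] at *
  omega

end Ideal


open Filter in
/-- Remark 1.5: comparison of `ν` for `R` and its reduction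
`R_red = R/√(0)`, and the consequence for the existence of the `F`-threshold. -/
theorem nu_reduction {R : Type*} [CommRing R] [IsNoetherianRing R]
    (p : ℕ) [Fact p.Prime] [CharP R p]
    (𝔞 J : Ideal R) (hrad : 𝔞 ≤ J.radical)
    (𝔞r Jr : Ideal (R ⧸ nilradical R))
    (h𝔞r : 𝔞r = 𝔞.map (Ideal.Quotient.mk (nilradical R)))
    (hJr : Jr = J.map (Ideal.Quotient.mk (nilradical R)))
    (μ : ℕ)
    (hμgen : ∃ s : Finset R, s.card = μ ∧ Ideal.span (s : Set R) = 𝔞)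
    (hμmin : ∀ s : Finset R, Ideal.span (s : Set R) = 𝔞 → μ ≤ s.card)
    (e' : ℕ) (he' : (nilradical R).frobPow (p ^ e') = ⊥) :
    (∀ e : ℕ,
      (𝔞r.fnu Jr (p ^ e * p ^ e') : ℝ) / (p ^ e * p ^ e' : ℕ) ≤
        (𝔞.fnu J (p ^ e * p ^ e') : ℝ) / (p ^ e * p ^ e' : ℕ) ∧
      (𝔞.fnu J (p ^ e * p ^ e') : ℝ) / (p ^ e * p ^ e' : ℕ) ≤
        (𝔞r.fnu Jr (p ^ e) : ℝ) / (p ^ e : ℕ) + (μ : ℝ) / (p ^ e : ℕ)) ∧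
    ∀ L : ℝ,
      Tendsto (fun e : ℕ => (𝔞r.fnu Jr (p ^ e) : ℝ) / (p ^ e : ℕ)) atTop (nhds L) →
      Tendsto (fun e : ℕ => (𝔞.fnu J (p ^ e) : ℝ) / (p ^ e : ℕ)) atTop (nhds L) := by
  obtain ⟨s, hcard, hspan⟩ := hμgen
  have hp : p.Prime := Fact.out
  haveI : Nontrivial R := CharP.nontrivial_of_char_ne_one hp.ne_one
  haveI hch : CharP (R ⧸ nilradical R) p := by
    constructor
    intro x
    rw [← map_natCast (Ideal.Quotient.mk (nilradical R)) x, Ideal.Quotient.eq_zero_iff_mem]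
    constructor
    · rintro ⟨k, hk⟩
      have hk' : ((x ^ k : ℕ) : R) = 0 := by push_cast; exact hk
      exact hp.dvd_of_dvd_pow ((CharP.cast_eq_zero_iff R p _).mp hk')
    · intro hx
      exact ⟨1, by rw [pow_one]; exact (CharP.cast_eq_zero_iff R p x).mpr hx⟩
  set mk := Ideal.Quotient.mk (nilradical R) with hmk
  classical
  have hspanr : 𝔞r = Ideal.span ((s.image mk : Finset _) : Set (R ⧸ nilradical R)) := by
    rw [h𝔞r, ← hspan, Ideal.map_span, Finset.coe_image]
  obtain ⟨N, hN⟩ : ∃ n, 𝔞 ^ n ≤ J :=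
    Ideal.exists_pow_le_of_le_radical_of_fg hrad (IsNoetherian.noetherian 𝔞)
  have hradr : 𝔞r ≤ Jr.radical := by
    rw [h𝔞r, hJr]
    exact le_trans (Ideal.map_mono hrad) (Ideal.map_radical_le mk)
  obtain ⟨Nr, hNr⟩ : ∃ n, 𝔞r ^ n ≤ Jr :=
    Ideal.exists_pow_le_of_le_radical_of_fg hradr (IsNoetherian.noetherian 𝔞r)
  have hB : ∀ Q : ℕ, 0 < Q → 𝔞 ^ (Q * (N + μ) + 1) ≤ J.frobPow Q := by
    intro Q hQ
    have h1 : Ideal.span (s : Set R) ^ (Q * (N + s.card) + 1) ≤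
        (Ideal.span (s : Set R) ^ (N + 1)).frobPow Q := Ideal.span_pow_le_frobPow s N Q hQ
    rw [hspan, hcard] at h1
    exact h1.trans (Ideal.frobPow_mono ((Ideal.pow_le_pow_right (Nat.le_succ N)).trans hN) Q)
  have hBr : ∀ Q : ℕ, 0 < Q →
      𝔞r ^ (Q * (Nr + (s.image mk).card) + 1) ≤ Jr.frobPow Q := by
    intro Q hQ
    have h1 := Ideal.span_pow_le_frobPow (s.image mk) Nr Q hQ
    rw [← hspanr] at h1
    exact h1.trans (Ideal.frobPow_mono ((Ideal.pow_le_pow_right (Nat.le_succ Nr)).trans hNr) Q)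
  have hqpos : ∀ e : ℕ, 0 < p ^ e := fun e => pow_pos hp.pos e
  have key : ∀ e : ℕ,
      𝔞r.fnu Jr (p ^ e * p ^ e') ≤ 𝔞.fnu J (p ^ e * p ^ e') ∧
      𝔞.fnu J (p ^ e * p ^ e') ≤ p ^ e' * (𝔞r.fnu Jr (p ^ e) + μ) := by
    intro e
    have hQpos : 0 < p ^ e * p ^ e' := Nat.mul_pos (hqpos e) (hqpos e')
    constructor
    · rcases Set.eq_empty_or_nonempty
        {r : ℕ | ¬ 𝔞r ^ r ≤ Jr.frobPow (p ^ e * p ^ e')} with hemp | hne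
      · rw [Ideal.fnu, hemp, csSup_empty]
        exact bot_le
      · refine csSup_le_csSup (Ideal.bddAbove_of (hB _ hQpos)) hne ?_
        intro r hr
        simp only [Set.mem_setOf_eq] at hr ⊢
        intro hle
        refine hr ?_
        have h2 := Ideal.map_mono (f := mk) hle
        rw [Ideal.map_pow, ← h𝔞r] at h2
        refine h2.trans ?_
        rw [hJr]
        exact Ideal.map_frobPow_le mk J _
    · set m := 𝔞r.fnu Jr (p ^ e) with hm
      have h1 : 𝔞r ^ (m + 1) ≤ Jr.frobPow (p ^ e) := Ideal.pow_fnu_succ (hBr _ (hqpos e))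
      have h2 : 𝔞 ^ (m + 1) ≤ J.frobPow (p ^ e) ⊔ nilradical R := by
        have hmap : Ideal.map mk (𝔞 ^ (m + 1)) ≤ Ideal.map mk (J.frobPow (p ^ e)) := by
          rw [Ideal.map_pow, ← h𝔞r, Ideal.map_frobPow p mk J e, ← hJr]
          exact h1
        have hcomap := Ideal.map_le_iff_le_comap.mp hmap
        refine hcomap.trans ?_
        rw [Ideal.comap_map_of_surjective mk Ideal.Quotient.mk_surjective]
        have hker : Ideal.comap mk ⊥ = nilradical R := by
          rw [← RingHom.ker_eq_comap_bot, Ideal.mk_ker]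
        rw [hker]
      have h3 : 𝔞 ^ (p ^ e' * (m + μ) + 1) ≤ J.frobPow (p ^ e * p ^ e') := by
        have hstep : Ideal.span (s : Set R) ^ (p ^ e' * (m + s.card) + 1) ≤
            (Ideal.span (s : Set R) ^ (m + 1)).frobPow (p ^ e') :=
          Ideal.span_pow_le_frobPow s m (p ^ e') (hqpos e')
        rw [hspan, hcard] at hstep
        refine hstep.trans ?_
        refine (Ideal.frobPow_mono h2 _).trans ?_
        refine (Ideal.frobPow_sup_le p _ _ e').trans ?_
        rw [he', Ideal.frobPow_frobPow p J (p ^ e) e', sup_bot_eq]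
      exact Ideal.fnu_le_of h3
  have part1 : ∀ e : ℕ,
      (𝔞r.fnu Jr (p ^ e * p ^ e') : ℝ) / (p ^ e * p ^ e' : ℕ) ≤
        (𝔞.fnu J (p ^ e * p ^ e') : ℝ) / (p ^ e * p ^ e' : ℕ) ∧
      (𝔞.fnu J (p ^ e * p ^ e') : ℝ) / (p ^ e * p ^ e' : ℕ) ≤
        (𝔞r.fnu Jr (p ^ e) : ℝ) / (p ^ e : ℕ) + (μ : ℝ) / (p ^ e : ℕ) := by
    intro e
    have hQpos : 0 < p ^ e * p ^ e' := Nat.mul_pos (hqpos e) (hqpos e')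
    have hQR : (0 : ℝ) < ((p ^ e * p ^ e' : ℕ) : ℝ) := by exact_mod_cast hQpos
    have hqR : (0 : ℝ) < ((p ^ e : ℕ) : ℝ) := by exact_mod_cast hqpos e
    have hq'R : (0 : ℝ) < ((p ^ e' : ℕ) : ℝ) := by exact_mod_cast hqpos e'
    constructor
    · have h := (key e).1
      apply div_le_div_of_nonneg_right ?_ hQR.le
      exact_mod_cast h
    · have h := (key e).2
      calc (𝔞.fnu J (p ^ e * p ^ e') : ℝ) / ((p ^ e * p ^ e' : ℕ) : ℝ)
          ≤ ((p ^ e' * (𝔞r.fnu Jr (p ^ e) + μ) : ℕ) : ℝ) / ((p ^ e * p ^ e' : ℕ) : ℝ) := by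
            apply div_le_div_of_nonneg_right ?_ hQR.le
            exact_mod_cast h
        _ = (𝔞r.fnu Jr (p ^ e) : ℝ) / (p ^ e : ℕ) + (μ : ℝ) / (p ^ e : ℕ) := by
            have hpne : ((p : ℝ)) ^ e' ≠ 0 := by
              have : (0 : ℝ) < (p : ℝ) := by exact_mod_cast hp.pos
              positivity
            push_cast
            rw [mul_comm ((p : ℝ) ^ e) ((p : ℝ) ^ e'), mul_div_mul_left _ _ hpne, add_div]
  refine ⟨part1, ?_⟩
  intro L hL
  have hplt : (1 : ℝ) < (p : ℝ) := by exact_mod_cast hp.one_lt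
  have hzero : Tendsto (fun e : ℕ => (μ : ℝ) / ((p ^ e : ℕ) : ℝ)) atTop (nhds 0) := by
    have h1 : Tendsto (fun e : ℕ => ((p : ℝ)) ^ e) atTop atTop :=
      tendsto_pow_atTop_atTop_of_one_lt hplt
    have h2 : Tendsto (fun e : ℕ => ((p ^ e : ℕ) : ℝ)) atTop atTop := by
      simpa [Nat.cast_pow] using h1
    exact h2.const_div_atTop (μ : ℝ)
  have hupper : Tendsto (fun e : ℕ =>
      (𝔞r.fnu Jr (p ^ (e - e')) : ℝ) / ((p ^ (e - e') : ℕ) : ℝ) +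
        (μ : ℝ) / ((p ^ (e - e') : ℕ) : ℝ)) atTop (nhds (L + 0)) :=
    (hL.comp (tendsto_sub_atTop_nat e')).add (hzero.comp (tendsto_sub_atTop_nat e'))
  rw [add_zero] at hupper
  refine tendsto_of_tendsto_of_tendsto_of_le_of_le' hL hupper ?_ ?_
  · filter_upwards [eventually_ge_atTop e'] with e he
    have h := (part1 (e - e')).1
    have hee : p ^ (e - e') * p ^ e' = p ^ e := by rw [← pow_add, Nat.sub_add_cancel he]
    rwa [hee] at h
  · filter_upwards [eventually_ge_atTop e'] with e he
    have h := (part1 (e - e')).2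
    have hee : p ^ (e - e') * p ^ e' = p ^ e := by rw [← pow_add, Nat.sub_add_cancel he]
    rwa [hee] at h
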